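/- Let h : ℝ^n → ℝ and s ∈ {−1,+1}^n be such that for every index q, h is monotone nondecreasing in coordinate q if s_q = +1 and monotone nonincreasing in coordinate q if s_q = −1. Let W ∈ ℝ^{n×m}, b ∈ ℝ^n, and let j be an index with s_q · W_{q,j} ≥ 0 for every q. Then the function v ↦ h(σ(W v + b)) from ℝ^m to ℝ is monotone nondecreasing in coordinate j, where σ(t) = max(t,0) is applied entrywise (ReLU). -/

import Mathlib

noncomputable section

/-- The ReLU activation function. -/
def relu (t : ℝ) : ℝ := max t 0

/-- `f : ℝ^m → ℝ` is monotone nondecreasing in coordinate `j`. -/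
def MonoIncAtF {m : ℕ} (f : (Fin m → ℝ) → ℝ) (j : Fin m) : Prop :=
  ∀ (u : Fin m → ℝ) (a a' : ℝ), a ≤ a' →
    f (Function.update u j a) ≤ f (Function.update u j a')

/-- `f : ℝ^m → ℝ` is monotone nonincreasing in coordinate `j`. -/
def MonoDecAtF {m : ℕ} (f : (Fin m → ℝ) → ℝ) (j : Fin m) : Prop :=
  ∀ (u : Fin m → ℝ) (a a' : ℝ), a ≤ a' →
    f (Function.update u j a') ≤ f (Function.update u j a)

lemma relu_mono : Monotone relu := fun a b hab => max_le_max hab le_rfl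

lemma key_coord_mono {n : ℕ} (h : (Fin n → ℝ) → ℝ) (s : Fin n → ℝ)
    (hmono : ∀ q, (s q = 1 → MonoIncAtF h q) ∧ (s q = -1 → MonoDecAtF h q))
    (hs : ∀ q, s q = 1 ∨ s q = -1)
    (g g' : Fin n → ℝ)
    (hle : ∀ q, s q = 1 → g q ≤ g' q)
    (hge : ∀ q, s q = -1 → g' q ≤ g q) :
    h g ≤ h g' := by
  have main : ∀ t : Finset (Fin n), h g ≤ h (fun q => if q ∈ t then g' q else g q) := by
    intro t
    induction t using Finset.induction with
    | empty => simp
    | @insert a t ha ih =>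
      refine le_trans ih ?_
      set base : Fin n → ℝ := fun q => if q ∈ t then g' q else g q with hbase
      have h1 : (fun q => if q ∈ t then g' q else g q) = Function.update base a (g a) := by
        funext q
        rcases eq_or_ne q a with rfl | hq
        · simp [Function.update_self, hbase, ha]
        · simp [Function.update_of_ne hq, hbase]
      have h2 : (fun q => if q ∈ insert a t then g' q else g q) = Function.update base a (g' a) := by
        funext q
        rcases eq_or_ne q a with rfl | hq
        · simp [Function.update_self]
        · simp [Function.update_of_ne hq, hbase, Finset.mem_insert, hq]
      rw [h2, show h base = h (Function.update base a (g a)) from by rw [← h1, ← hbase]]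
      rcases hs a with hsa | hsa
      · exact (hmono a).1 hsa base _ _ (hle a hsa)
      · exact (hmono a).2 hsa base _ _ (hge a hsa)
  have := main Finset.univ
  simpa using this

/-- If `h` is coordinatewise monotone according to the sign
vector `s ∈ {−1, +1}^n` and `s q * W q j ≥ 0` for every `q`, then
`v ↦ h (σ (W v + b))` is monotone nondecreasing in coordinate `j`. -/
theorem statement_2 {n m : ℕ} (h : (Fin n → ℝ) → ℝ) (s : Fin n → ℝ)
    (hs : ∀ q, s q = 1 ∨ s q = -1)
    (hmono : ∀ q, (s q = 1 → MonoIncAtF h q) ∧ (s q = -1 → MonoDecAtF h q))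
    (W : Matrix (Fin n) (Fin m) ℝ) (b : Fin n → ℝ) (j : Fin m)
    (hW : ∀ q, 0 ≤ s q * W q j) :
    MonoIncAtF (fun v => h fun q => relu (W.mulVec v q + b q)) j := by
  intro u a a' haa
  apply key_coord_mono h s hmono hs
  all_goals {
    intro q hsq
    have hmv : ∀ c : ℝ, W.mulVec (Function.update u j c) q
        = (∑ i ∈ Finset.univ.erase j, W q i * u i) + W q j * c := by
      intro c
      simp only [Matrix.mulVec, dotProduct]
      rw [← Finset.sum_erase_add _ _ (Finset.mem_univ j)]
      congr 1
      · exact Finset.sum_congr rfl fun i hi => by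
          rw [Function.update_of_ne (Finset.ne_of_mem_erase hi)]
      · rw [Function.update_self]
    apply relu_mono
    rw [hmv, hmv]
    have := hW q
    rw [hsq] at this
    nlinarith
  }
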